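/- arXiv:0910.5432 — 3 statements merged into one kernel-verified Lean document; each statement's English description precedes it below -/
import Mathlib

section
/- Let R(z) ∈ C[[z]] and n > k ≥ 0, m ≥ 1. Then Ψ_{1,n}(R(z)/(1−t·z^k)^m) = (1/(m−1)!)·d^{m−1}/dz^{m−1}( z^{m−1}·φ_{n−k}(R(z)) ), where φ_j(∑ r_i z^i) = ∑ r_{ij} z^i. -/
open PowerSeries

/-- Model of `ℂ⟦t,z⟧` as `ℂ⟦z⟧⟦t⟧`; `Ψ_{1,n}` sends `∑ a_{i,j} tⁱ zʲ` to `∑ᵢ a_{i,i·n} zⁱ`. -/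
noncomputable def Psi (n : ℕ) (F : PowerSeries (PowerSeries ℂ)) : PowerSeries ℂ :=
  PowerSeries.mk fun i =>
    PowerSeries.coeff (R := ℂ) (i * n) (PowerSeries.coeff (R := PowerSeries ℂ) i F)

/-- The coefficient-extraction operator `φ_j(∑ rᵢ zⁱ) = ∑ r_{i·j} zⁱ`. -/
noncomputable def phi (j : ℕ) (F : PowerSeries ℂ) : PowerSeries ℂ :=
  PowerSeries.mk fun i => PowerSeries.coeff (R := ℂ) (i * j) F

noncomputable def geom (k m : ℕ) : PowerSeries (PowerSeries ℂ) :=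
  PowerSeries.mk fun i => PowerSeries.C (R := ℂ) (((m + i).choose i : ℂ)) * PowerSeries.X ^ (k * i)

lemma coeff_one_sub_mul (b : PowerSeries ℂ) (f : PowerSeries (PowerSeries ℂ)) (j : ℕ) :
    (PowerSeries.coeff (j + 1)) ((1 - PowerSeries.C (R := PowerSeries ℂ) b * PowerSeries.X) * f)
      = PowerSeries.coeff (j + 1) f - b * PowerSeries.coeff j f := by
  have : (1 - PowerSeries.C (R := PowerSeries ℂ) b * PowerSeries.X) * f
      = f - PowerSeries.C (R := PowerSeries ℂ) b * (PowerSeries.X * f) := by ring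
  rw [this, map_sub, coeff_C_mul, coeff_succ_X_mul]

lemma coeff_zero_one_sub_mul (b : PowerSeries ℂ) (f : PowerSeries (PowerSeries ℂ)) :
    (PowerSeries.coeff 0) ((1 - PowerSeries.C (R := PowerSeries ℂ) b * PowerSeries.X) * f)
      = PowerSeries.coeff 0 f := by
  have : (1 - PowerSeries.C (R := PowerSeries ℂ) b * PowerSeries.X) * f
      = f - PowerSeries.C (R := PowerSeries ℂ) b * (PowerSeries.X * f) := by ring
  rw [this, map_sub, coeff_C_mul, coeff_zero_X_mul, mul_zero, sub_zero]

lemma geom_zero (k : ℕ) :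
    (1 - PowerSeries.C (R := PowerSeries ℂ) (PowerSeries.X ^ k) * PowerSeries.X) * geom k 0 = 1 := by
  ext j
  rcases j with _ | j
  · rw [coeff_zero_one_sub_mul]; simp [geom]
  · rw [coeff_one_sub_mul]
    simp [geom, coeff_mk, pow_succ, Nat.mul_succ, pow_add, mul_comm]

lemma geom_succ (k m : ℕ) :
    (1 - PowerSeries.C (R := PowerSeries ℂ) (PowerSeries.X ^ k) * PowerSeries.X) * geom k (m + 1)
      = geom k m := by
  ext j
  rcases j with _ | j
  · rw [coeff_zero_one_sub_mul]; simp [geom]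
  · rw [coeff_one_sub_mul]
    simp only [geom, coeff_mk]
    rw [Nat.mul_succ, pow_add]
    congr 1
    have hn : (m + 1 + (j + 1)).choose (j + 1)
        = (m + 1 + j).choose j + (m + (j + 1)).choose (j + 1) := by
      rw [show m + (j + 1) = m + 1 + j by omega,
        show m + 1 + (j + 1) = (m + 1 + j) + 1 by omega, Nat.choose_succ_succ]
    rw [hn]
    push_cast
    rw [map_add]
    ring

lemma geom_inv (k m : ℕ) (hm : 1 ≤ m) :
    Ring.inverse ((1 - PowerSeries.C (R := PowerSeries ℂ) (PowerSeries.X ^ k) * PowerSeries.X) ^ m)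
      = geom k (m - 1) := by
  obtain ⟨m, rfl⟩ := Nat.exists_eq_add_of_le hm
  have key : ∀ d : ℕ,
      (1 - PowerSeries.C (R := PowerSeries ℂ) (PowerSeries.X ^ k) * PowerSeries.X) ^ (d + 1)
        * geom k d = 1 := by
    intro d
    induction d with
    | zero => simpa using geom_zero k
    | succ d ih =>
      calc (1 - PowerSeries.C (R := PowerSeries ℂ) (PowerSeries.X ^ k) * PowerSeries.X) ^ (d + 1 + 1)
            * geom k (d + 1)
          = (1 - PowerSeries.C (R := PowerSeries ℂ) (PowerSeries.X ^ k) * PowerSeries.X) ^ (d + 1) *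
            ((1 - PowerSeries.C (R := PowerSeries ℂ) (PowerSeries.X ^ k) * PowerSeries.X)
              * geom k (d + 1)) := by ring
        _ = 1 := by rw [geom_succ]; exact ih
  have h := key m
  rw [show 1 + m = m + 1 by omega, show m + 1 - 1 = m by omega]
  obtain ⟨u, hu'⟩ := IsUnit.of_mul_eq_one _ h
  rw [← hu', Ring.inverse_unit]
  have h2 : (u : PowerSeries (PowerSeries ℂ)) * geom k m = 1 := by rw [hu']; exact h
  calc (↑u⁻¹ : PowerSeries (PowerSeries ℂ)) = ↑u⁻¹ * (↑u * geom k m) := by rw [h2, mul_one]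
    _ = geom k m := by rw [← mul_assoc, ← Units.val_mul, inv_mul_cancel u]; simp

lemma coeff_derivativeFun_iterate (d : ℕ) (f : PowerSeries ℂ) (i : ℕ) :
    PowerSeries.coeff (R := ℂ) i (PowerSeries.derivativeFun^[d] f)
      = ((i + d).factorial / i.factorial : ℂ) * PowerSeries.coeff (R := ℂ) (i + d) f := by
  induction d generalizing f with
  | zero =>
    have h1 : (i.factorial : ℂ) ≠ 0 := by exact_mod_cast i.factorial_ne_zero
    simp [div_self h1]
  | succ d ih =>
    rw [Function.iterate_succ_apply, ih]
    erw [coeff_derivativeFun]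
    rw [
      show i + (d + 1) = i + d + 1 by omega, Nat.factorial_succ]
    have h1 : (i.factorial : ℂ) ≠ 0 := by exact_mod_cast i.factorial_ne_zero
    push_cast
    field_simp

/-- For `n > k ≥ 0` and `m ≥ 1`:
`Ψ_{1,n}(R(z)/(1-t·z^k)ᵐ) = (1/(m-1)!)·(d/dz)^{m-1}(z^{m-1}·φ_{n-k}(R(z)))`. -/
theorem Psi_n_gt_k (R : PowerSeries ℂ) (n k m : ℕ) (hnk : k < n) (hm : 1 ≤ m) :
    Psi n (PowerSeries.C (R := PowerSeries ℂ) R *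
        Ring.inverse ((1 - PowerSeries.C (R := PowerSeries ℂ) (PowerSeries.X ^ k) *
          PowerSeries.X) ^ m)) =
      (((m - 1).factorial : ℂ))⁻¹ •
        (PowerSeries.derivativeFun)^[m - 1]
          (PowerSeries.X ^ (m - 1) * phi (n - k) R) := by
  rw [geom_inv k m hm]
  ext i
  rw [Psi, coeff_mk, map_smul, coeff_derivativeFun_iterate, mul_comm (X ^ (m-1)),
    coeff_mul_X_pow, phi, coeff_mk, coeff_C_mul, geom, coeff_mk]
  have hrw : i * n = i * (n - k) + k * i := by
    rw [mul_comm k i, ← Nat.mul_add, Nat.sub_add_cancel hnk.le]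
  rw [hrw, show R * (PowerSeries.C (R := ℂ) ((m - 1 + i).choose i : ℂ) * X ^ (k * i))
      = (PowerSeries.C (R := ℂ) ((m - 1 + i).choose i : ℂ) * R) * X ^ (k * i) by ring,
    coeff_mul_X_pow, coeff_C_mul]
  rw [Nat.cast_choose ℂ (Nat.le_add_left i (m - 1)), show m - 1 + i - i = m - 1 by omega]
  have h1 : (i.factorial : ℂ) ≠ 0 := by exact_mod_cast i.factorial_ne_zero
  have h2 : ((m - 1).factorial : ℂ) ≠ 0 := by exact_mod_cast (m - 1).factorial_ne_zero
  rw [show m - 1 + i = i + (m - 1) by omega]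
  field_simp
  ring_nf
  field_simp
end

section
/- The formal power series identity ∑_{i≥0} dim(A_i)·z^i = 1/((1−z)^2·(1−z^2)) holds, where A = ker D is the kernel of the Weitzenböck derivation D on K[x_0, x_1, y_0, y_1] defined by D(x_0)=0, D(x_1)=x_0, D(y_0)=0, D(y_1)=y_0, graded by total degree. -/
open MvPolynomial Finsupp

noncomputable section
namespace WeitzD

variable {K : Type} [Field K] [CharZero K]

/-- coefficient of pderiv -/
lemma coeff_pderiv (i : Fin 4) (f : MvPolynomial (Fin 4) K) (m : Fin 4 →₀ ℕ) :
    coeff m (pderiv i f) = (m i + 1) * coeff (m + Finsupp.single i 1) f := by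
  induction f using MvPolynomial.induction_on' with
  | monomial s a =>
    rw [pderiv_monomial, coeff_monomial, coeff_monomial]
    by_cases h : s i = 0
    · have h1 : s - Finsupp.single i 1 = s := by
        ext j
        rcases eq_or_ne j i with hj | hj
        · simp [hj, h]
        · simp [Finsupp.single_apply, Ne.symm hj]
      rw [h1]
      have h2 : s ≠ m + Finsupp.single i 1 := by
        intro hs; apply_fun (fun t => t i) at hs; simp [h] at hs
      by_cases h3 : s = m <;> simp [h2, h3, h]
      subst h3; exact Or.inr h
    · by_cases h3 : s = m + Finsupp.single i 1
      · subst h3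
        have h1 : m + Finsupp.single i 1 - Finsupp.single i 1 = m := by
          ext j; by_cases hj : j = i <;> simp [Finsupp.single_apply, hj]
        simp [h1, mul_comm]
      · have h4 : ¬ (s - Finsupp.single i 1 = m) := by
          intro hs
          apply h3
          ext j
          by_cases hj : j = i
          · subst hj
            have := congrArg (fun t => t j) hs
            simp at this
            simp [Finsupp.single_apply]
            omega
          · have := congrArg (fun t => t j) hs
            simp [Finsupp.single_apply, Ne.symm hj] at this ⊢
            omega
        simp [h3, h4]
  | add p q hp hq => simp [hp, hq]; ring

end WeitzD

namespace WeitzD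
variable {K : Type} [Field K] [CharZero K]

/-- exponent vector -/
def e (a b c d : ℕ) : Fin 4 →₀ ℕ :=
  Finsupp.single 0 a + Finsupp.single 1 b + Finsupp.single 2 c + Finsupp.single 3 d

lemma e_apply0 (a b c d : ℕ) : e a b c d 0 = a := by
  simp [e, Finsupp.single_apply]
lemma e_apply1 (a b c d : ℕ) : e a b c d 1 = b := by
  simp [e, Finsupp.single_apply]
lemma e_apply2 (a b c d : ℕ) : e a b c d 2 = c := by
  simp [e, Finsupp.single_apply]
lemma e_apply3 (a b c d : ℕ) : e a b c d 3 = d := by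
  simp [e, Finsupp.single_apply]

lemma eq_e (m : Fin 4 →₀ ℕ) : m = e (m 0) (m 1) (m 2) (m 3) := by
  ext j
  fin_cases j <;> simp [e_apply0, e_apply1, e_apply2, e_apply3]

lemma e_inj {a b c d a' b' c' d' : ℕ} (h : e a b c d = e a' b' c' d') :
    a = a' ∧ b = b' ∧ c = c' ∧ d = d' := by
  refine ⟨?_, ?_, ?_, ?_⟩
  · have := congrArg (fun t => t 0) h; simpa [e_apply0] using this
  · have := congrArg (fun t => t 1) h; simpa [e_apply1] using this
  · have := congrArg (fun t => t 2) h; simpa [e_apply2] using this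
  · have := congrArg (fun t => t 3) h; simpa [e_apply3] using this

lemma e_succ0 (a b c d : ℕ) : e (a+1) b c d = Finsupp.single 0 1 + e a b c d := by
  simp only [e, Finsupp.single_add]; abel
lemma e_succ1 (a b c d : ℕ) : e a (b+1) c d = Finsupp.single 1 1 + e a b c d := by
  simp only [e, Finsupp.single_add]; abel
lemma e_succ2 (a b c d : ℕ) : e a b (c+1) d = Finsupp.single 2 1 + e a b c d := by
  simp only [e, Finsupp.single_add]; abel
lemma e_succ3 (a b c d : ℕ) : e a b c (d+1) = Finsupp.single 3 1 + e a b c d := by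
  simp only [e, Finsupp.single_add]; abel

lemma degree_e (a b c d : ℕ) : (e a b c d).degree = a + b + c + d := by
  have h : ∀ m : Fin 4 →₀ ℕ, m.degree = Finsupp.weight 1 m := by
    intro m; rw [Finsupp.degree_eq_weight_one]; rfl
  simp only [e, h, map_add]
  simp [Finsupp.weight_apply]

end WeitzD

namespace WeitzD
variable {K : Type} [Field K] [CharZero K]

lemma D_eq (D : Derivation K (MvPolynomial (Fin 4) K) (MvPolynomial (Fin 4) K))
    (hD : D = MvPolynomial.mkDerivation K ![0, MvPolynomial.X 0, 0, MvPolynomial.X 2])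
    (f : MvPolynomial (Fin 4) K) :
    D f = X 0 * pderiv 1 f + X 2 * pderiv 3 f := by
  have h : D = (X 0 : MvPolynomial (Fin 4) K) •
        (pderiv 1 : Derivation K (MvPolynomial (Fin 4) K) (MvPolynomial (Fin 4) K)) +
      (X 2 : MvPolynomial (Fin 4) K) •
        (pderiv 3 : Derivation K (MvPolynomial (Fin 4) K) (MvPolynomial (Fin 4) K)) := by
    rw [hD]
    apply derivation_ext
    intro i
    fin_cases i <;>
      simp [mkDerivation_X, pderiv_X, Pi.single_apply]
  rw [h]
  simp [smul_eq_mul]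

end WeitzD

namespace WeitzD
set_option linter.unusedSectionVars false
variable {K : Type} [Field K] [CharZero K]

section Rec
variable {f : MvPolynomial (Fin 4) K}
  (hf : X 0 * pderiv 1 f + X 2 * pderiv 3 f = 0)

include hf

lemma rec1 (a b c d : ℕ) :
    ((b:K)+1) * coeff (e a (b+1) (c+1) d) f
      + ((d:K)+1) * coeff (e (a+1) b c (d+1)) f = 0 := by
  have h := congrArg (coeff (e (a+1) b (c+1) d)) hf
  rw [coeff_zero, coeff_add] at h
  have h1 : coeff (e (a+1) b (c+1) d) (X 0 * pderiv 1 f)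
      = ((b:K)+1) * coeff (e a (b+1) (c+1) d) f := by
    rw [e_succ0, coeff_X_mul, coeff_pderiv, e_apply1, add_comm (e a b (c+1) d), ← e_succ1]
  have h2 : coeff (e (a+1) b (c+1) d) (X 2 * pderiv 3 f)
      = ((d:K)+1) * coeff (e (a+1) b c (d+1)) f := by
    rw [e_succ2, coeff_X_mul, coeff_pderiv, e_apply3, add_comm (e (a+1) b c d), ← e_succ3]
  rw [h1, h2] at h
  exact h

lemma rec2 (a b d : ℕ) : coeff (e a (b+1) 0 d) f = 0 := by
  have h := congrArg (coeff (e (a+1) b 0 d)) hf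
  rw [coeff_zero, coeff_add] at h
  have h1 : coeff (e (a+1) b 0 d) (X 0 * pderiv 1 f)
      = ((b:K)+1) * coeff (e a (b+1) 0 d) f := by
    rw [e_succ0, coeff_X_mul, coeff_pderiv, e_apply1, add_comm (e a b 0 d), ← e_succ1]
  have h2 : coeff (e (a+1) b 0 d) (X 2 * pderiv 3 f) = 0 := by
    classical
    rw [coeff_X_mul']
    have : (2 : Fin 4) ∉ (e (a+1) b 0 d).support := by
      simp [Finsupp.mem_support_iff, e_apply2]
    simp [this]
  rw [h1, h2, add_zero] at h
  have hb : ((b:K)+1) ≠ 0 := Nat.cast_add_one_ne_zero b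
  exact (mul_eq_zero.mp h).resolve_left hb

lemma rec3 (b c d : ℕ) : coeff (e 0 b c (d+1)) f = 0 := by
  have h := congrArg (coeff (e 0 b (c+1) d)) hf
  rw [coeff_zero, coeff_add] at h
  have h1 : coeff (e 0 b (c+1) d) (X 0 * pderiv 1 f) = 0 := by
    classical
    rw [coeff_X_mul']
    have : (0 : Fin 4) ∉ (e 0 b (c+1) d).support := by
      simp [Finsupp.mem_support_iff, e_apply0]
    simp [this]
  have h2 : coeff (e 0 b (c+1) d) (X 2 * pderiv 3 f)
      = ((d:K)+1) * coeff (e 0 b c (d+1)) f := by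
    rw [e_succ2, coeff_X_mul, coeff_pderiv, e_apply3, add_comm (e 0 b c d), ← e_succ3]
  rw [h1, h2, zero_add] at h
  have hd : ((d:K)+1) ≠ 0 := Nat.cast_add_one_ne_zero d
  exact (mul_eq_zero.mp h).resolve_left hd

end Rec
end WeitzD

namespace WeitzD
set_option linter.unusedSectionVars false
variable {K : Type} [Field K] [CharZero K]

section Key
variable {f : MvPolynomial (Fin 4) K}
  (hf : X 0 * pderiv 1 f + X 2 * pderiv 3 f = 0)

include hf

lemma keyI : ∀ c a γ δ : ℕ,
    (∏ j ∈ Finset.range c, ((δ:K) + j + 1)) * coeff (e a 0 γ (δ+c)) f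
      = (-1)^c * (Nat.factorial c : K) *
        (if c ≤ a then coeff (e (a-c) c (γ+c) δ) f else 0) := by
  intro c
  induction c with
  | zero => intro a γ δ; simp
  | succ c ih =>
    intro a γ δ
    have hprod : (∏ j ∈ Finset.range (c+1), ((δ:K) + j + 1))
        = ((δ:K) + 1) * ∏ j ∈ Finset.range c, (((δ+1 : ℕ):K) + j + 1) := by
      rw [Finset.prod_range_succ']
      push_cast
      rw [mul_comm]
      congr 1
      · push_cast; ring
      · apply Finset.prod_congr rfl; intro j _; push_cast; ring
    have hδc : δ + (c+1) = (δ+1) + c := by omega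
    rw [hprod, hδc, mul_assoc]
    rw [ih a γ (δ+1)]
    by_cases hca : c + 1 ≤ a
    · have hca' : c ≤ a := by omega
      rw [if_pos hca', if_pos hca]
      -- use rec1 at (a-c-1, c, γ+c, δ)
      have hr := rec1 hf (a-c-1) c (γ+c) δ
      have ha1 : a - c - 1 + 1 = a - c := by omega
      have ha2 : a - c - 1 = a - (c+1) := by omega
      rw [ha1, ha2] at hr
      have h2 : ((δ:K)+1) * coeff (e (a-c) c (γ+c) (δ+1)) f
          = -(((c:K)+1) * coeff (e (a-(c+1)) (c+1) (γ+c+1) δ) f) := by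
        linear_combination hr
      push_cast
      calc ((δ:K)+1) * ((-1)^c * (Nat.factorial c : K) * coeff (e (a-c) c (γ+c) (δ+1)) f)
          = (-1)^c * (Nat.factorial c : K)
              * (((δ:K)+1) * coeff (e (a-c) c (γ+c) (δ+1)) f) := by ring
        _ = (-1)^c * (Nat.factorial c : K)
              * (-(((c:K)+1) * coeff (e (a-(c+1)) (c+1) (γ+c+1) δ) f)) := by rw [h2]
        _ = (-1)^(c+1) * ((Nat.factorial c : K) * ((c:K)+1))
              * coeff (e (a-(c+1)) (c+1) (γ+(c+1)) δ) f := by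
            rw [show γ + (c+1) = γ + c + 1 from rfl]; ring
        _ = (-1)^(c+1) * ((Nat.factorial (c+1) : K))
              * coeff (e (a-(c+1)) (c+1) (γ+(c+1)) δ) f := by
            rw [Nat.factorial_succ]; push_cast; ring
        _ = _ := by ring
    · rw [if_neg hca]
      by_cases hca' : c ≤ a
      · have hac : a = c := by omega
        rw [if_pos hca', hac]
        have h0 : coeff (e (c-c) c (γ+c) (δ+1)) f = 0 := by
          have := rec3 hf c (γ+c) δ
          simpa [Nat.sub_self] using this
        rw [h0]
        ring
      · rw [if_neg hca']
        ring

lemma L1 {a γ d : ℕ} (h : a < d) : coeff (e a 0 γ d) f = 0 := by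
  have h0 := keyI hf d a γ 0
  rw [if_neg (by omega)] at h0
  simp only [mul_zero] at h0
  have hprod : (∏ j ∈ Finset.range d, (((0:ℕ):K) + j + 1)) ≠ 0 := by
    apply Finset.prod_ne_zero_iff.mpr
    intro j _
    have : (((0:ℕ):K) + j + 1) = ((j:K) + 1) := by push_cast; ring
    rw [this]
    exact Nat.cast_add_one_ne_zero j
  have := mul_eq_zero.mp h0
  rcases this with h' | h'
  · exact absurd h' hprod
  · simpa using h'

lemma eq_zero_of_slice (h0 : ∀ a γ d, coeff (e a 0 γ d) f = 0) : f = 0 := by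
  have hb : ∀ b a γ d, coeff (e a b γ d) f = 0 := by
    intro b
    induction b with
    | zero => exact h0
    | succ b ih =>
      intro a γ d
      cases γ with
      | zero => exact rec2 hf a b d
      | succ γ =>
        have hr := rec1 hf a b γ d
        rw [ih (a+1) γ (d+1), mul_zero, add_zero] at hr
        exact (mul_eq_zero.mp hr).resolve_left (Nat.cast_add_one_ne_zero b)
  ext m
  rw [coeff_zero, eq_e m]
  exact hb (m 1) (m 0) (m 2) (m 3)

end Key
end WeitzD

namespace WeitzD
set_option linter.unusedSectionVars false
variable {K : Type} [Field K] [CharZero K]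

/-- substitution x₁ ↦ 0 -/
def phi (K : Type) [Field K] : MvPolynomial (Fin 4) K →ₐ[K] MvPolynomial (Fin 4) K :=
  aeval ![X 0, 0, X 2, X 3]

lemma monomial_e (a b c d : ℕ) (r : K) :
    monomial (e a b c d) r = C r * X 0 ^ a * X 1 ^ b * X 2 ^ c * X 3 ^ d := by
  simp only [X_pow_eq_monomial, C_apply, monomial_mul]
  rw [show r * 1 * 1 * 1 * 1 = r by ring]
  congr 1
  simp [e]

lemma phi_monomial (s : Fin 4 →₀ ℕ) (r : K) :
    phi K (monomial s r) = if s 1 = 0 then monomial s r else 0 := by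
  rw [eq_e s, monomial_e]
  simp only [phi, map_mul, map_pow, aeval_X, aeval_C]
  have h0 : (![X 0, 0, X 2, X 3] : Fin 4 → MvPolynomial (Fin 4) K) 0 = X 0 := rfl
  have h1 : (![X 0, 0, X 2, X 3] : Fin 4 → MvPolynomial (Fin 4) K) 1 = 0 := rfl
  have h2 : (![X 0, 0, X 2, X 3] : Fin 4 → MvPolynomial (Fin 4) K) 2 = X 2 := rfl
  have h3 : (![X 0, 0, X 2, X 3] : Fin 4 → MvPolynomial (Fin 4) K) 3 = X 3 := rfl
  rw [h0, h1, h2, h3]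
  by_cases hb : s 1 = 0
  · rw [if_pos]
    · rw [hb]
      simp [algebraMap_eq]
    · simp [e_apply1, hb]
  · rw [if_neg]
    · rw [zero_pow hb]
      ring
    · simp [e_apply1, hb]

lemma coeff_phi (m : Fin 4 →₀ ℕ) (f : MvPolynomial (Fin 4) K) :
    coeff m (phi K f) = if m 1 = 0 then coeff m f else 0 := by
  induction f using MvPolynomial.induction_on' with
  | monomial s r =>
    rw [phi_monomial]
    by_cases hs : s 1 = 0
    · rw [if_pos hs, coeff_monomial]
      by_cases hsm : s = m
      · subst hsm; simp [hs]
      · simp [coeff_monomial, hsm]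
    · rw [if_neg hs, coeff_zero, coeff_monomial]
      by_cases hm : m 1 = 0
      · have : s ≠ m := fun h => hs (h ▸ hm)
        simp [hm, this]
      · simp [hm]
  | add p q hp hq =>
    simp only [map_add, coeff_add, hp, hq]
    split <;> simp

end WeitzD

namespace WeitzD
open Finset

/-- index set: (a, b, c) with a + b + 2c = i -/
def S (i : ℕ) : Finset (ℕ × ℕ × ℕ) :=
  (range (i+1) ×ˢ range (i+1) ×ˢ range (i+1)).filter
    (fun p => p.1 + p.2.1 + 2 * p.2.2 = i)

lemma mem_S {i : ℕ} {p : ℕ × ℕ × ℕ} : p ∈ S i ↔ p.1 + p.2.1 + 2 * p.2.2 = i := by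
  simp only [S, mem_filter, mem_product, mem_range]
  constructor
  · tauto
  · intro h; refine ⟨⟨?_, ?_, ?_⟩, h⟩ <;> omega

lemma card_S_zero : (S 0).card = 1 := by decide
lemma card_S_one : (S 1).card = 2 := by decide
lemma card_S_two : (S 2).card = 4 := by decide
lemma card_S_three : (S 3).card = 6 := by decide

lemma card_S_rec (n : ℕ) : (S (n+2)).card = (S n).card + (n+3) := by
  classical
  have hsplit := Finset.card_filter_add_card_filter_not
    (s := S (n+2)) (p := fun p => p.2.2 = 0)
  have h1 : ((S (n+2)).filter (fun p => p.2.2 = 0)).card = n + 3 := by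
    rw [← Finset.Nat.card_antidiagonal (n+2)]
    apply Finset.card_bij (fun p _ => (p.1, p.2.1))
    · intro p hp
      simp only [mem_filter, mem_S] at hp
      simp only [Finset.HasAntidiagonal.mem_antidiagonal]
      omega
    · intro p hp q hq h
      simp only [mem_filter, mem_S] at hp hq
      obtain ⟨p1, p2, p3⟩ := p
      obtain ⟨q1, q2, q3⟩ := q
      simp only [Prod.mk.injEq] at h ⊢
      dsimp only at hp hq
      omega
    · intro q hq
      obtain ⟨q1, q2⟩ := q
      simp only [Finset.HasAntidiagonal.mem_antidiagonal] at hq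
      refine ⟨(q1, q2, 0), ?_, rfl⟩
      simp only [mem_filter, mem_S]
      exact ⟨by omega, trivial⟩
  have h2 : ((S (n+2)).filter (fun p => ¬ p.2.2 = 0)).card = (S n).card := by
    apply Finset.card_bij (fun p _ => (p.1, p.2.1, p.2.2 - 1))
    · intro p hp
      simp only [mem_filter, mem_S] at hp
      rw [mem_S]
      simp only
      omega
    · intro p hp q hq h
      simp only [mem_filter, mem_S] at hp hq
      obtain ⟨p1, p2, p3⟩ := p
      obtain ⟨q1, q2, q3⟩ := q
      simp only [Prod.mk.injEq] at h ⊢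
      dsimp only at hp hq
      omega
    · intro q hq
      obtain ⟨q1, q2, q3⟩ := q
      rw [mem_S] at hq
      dsimp only at hq
      refine ⟨(q1, q2, q3 + 1), ?_, ?_⟩
      · simp only [mem_filter, mem_S]
        omega
      · simp
  omega

end WeitzD

namespace WeitzD
set_option linter.unusedSectionVars false
open Finset
variable {K : Type} [Field K] [CharZero K]

def T (i : ℕ) : Finset (Fin 4 →₀ ℕ) :=
  (S i).image (fun p => e (p.1 + p.2.2) 0 p.2.1 p.2.2)

lemma card_T (i : ℕ) : (T i).card = (S i).card := by
  apply Finset.card_image_of_injOn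
  intro p _ q _ h
  obtain ⟨h1, _, h2, h3⟩ := e_inj h
  obtain ⟨p1, p2, p3⟩ := p
  obtain ⟨q1, q2, q3⟩ := q
  dsimp only at h1 h2 h3
  simp only [Prod.mk.injEq]
  omega

lemma mem_T {i : ℕ} {m : Fin 4 →₀ ℕ} :
    m ∈ T i ↔ m 1 = 0 ∧ m 0 + m 2 + m 3 = i ∧ m 3 ≤ m 0 := by
  constructor
  · intro hm
    obtain ⟨p, hp, rfl⟩ := Finset.mem_image.mp hm
    rw [mem_S] at hp
    obtain ⟨a, b, c⟩ := p
    dsimp only at hp ⊢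
    simp only [e_apply0, e_apply1, e_apply2, e_apply3]
    exact ⟨trivial, by omega, by omega⟩
  · rintro ⟨h1, h2, h3⟩
    apply Finset.mem_image.mpr
    refine ⟨(m 0 - m 3, m 2, m 3), ?_, ?_⟩
    · rw [mem_S]; dsimp only; omega
    · have : m 0 - m 3 + m 3 = m 0 := by omega
      rw [this, ← h1]
      exact (eq_e m).symm

def Delta (K : Type) [Field K] : MvPolynomial (Fin 4) K := X 0 * X 3 - X 1 * X 2

def Bf (K : Type) [Field K] (p : ℕ × ℕ × ℕ) : MvPolynomial (Fin 4) K :=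
  X 0 ^ p.1 * X 2 ^ p.2.1 * Delta K ^ p.2.2

lemma Bf_hom {i : ℕ} {p : ℕ × ℕ × ℕ} (hp : p ∈ S i) :
    (Bf K p).IsHomogeneous i := by
  rw [mem_S] at hp
  have h0 : (X 0 ^ p.1 : MvPolynomial (Fin 4) K).IsHomogeneous p.1 := by
    simpa using (isHomogeneous_X K (0 : Fin 4)).pow p.1
  have h2 : (X 2 ^ p.2.1 : MvPolynomial (Fin 4) K).IsHomogeneous p.2.1 := by
    simpa using (isHomogeneous_X K (2 : Fin 4)).pow p.2.1
  have hd : (Delta K).IsHomogeneous 2 := by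
    apply MvPolynomial.IsHomogeneous.sub
    · simpa using (isHomogeneous_X K (0 : Fin 4)).mul (isHomogeneous_X K (3 : Fin 4))
    · simpa using (isHomogeneous_X K (1 : Fin 4)).mul (isHomogeneous_X K (2 : Fin 4))
  have hdp : ((Delta K) ^ p.2.2).IsHomogeneous (2 * p.2.2) := hd.pow p.2.2
  have := (h0.mul h2).mul hdp
  rw [show p.1 + p.2.1 + 2 * p.2.2 = i from hp] at this
  exact this

lemma D_Bf (D : Derivation K (MvPolynomial (Fin 4) K) (MvPolynomial (Fin 4) K))
    (hD : D = MvPolynomial.mkDerivation K ![0, MvPolynomial.X 0, 0, MvPolynomial.X 2])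
    (p : ℕ × ℕ × ℕ) : D (Bf K p) = 0 := by
  have hX0 : D (X 0) = 0 := by rw [hD, mkDerivation_X]; rfl
  have hX1 : D (X 1) = X 0 := by rw [hD, mkDerivation_X]; rfl
  have hX2 : D (X 2) = 0 := by rw [hD, mkDerivation_X]; rfl
  have hX3 : D (X 3) = X 2 := by rw [hD, mkDerivation_X]; rfl
  have hDelta : D (Delta K) = 0 := by
    simp only [Delta, map_sub, Derivation.leibniz, hX0, hX1, hX2, hX3,
      smul_eq_mul, mul_zero, zero_add, add_zero]
    ring
  simp only [Bf, Derivation.leibniz, Derivation.leibniz_pow, hX0, hX2, hDelta,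
    smul_eq_mul, mul_zero, zero_add, add_zero, smul_zero]

lemma phi_Bf (p : ℕ × ℕ × ℕ) :
    phi K (Bf K p) = monomial (e (p.1 + p.2.2) 0 p.2.1 p.2.2) (1 : K) := by
  have hd : phi K (Delta K) = X 0 * X 3 := by
    simp only [phi, Delta, map_sub, map_mul, aeval_X]
    have h0 : (![X 0, 0, X 2, X 3] : Fin 4 → MvPolynomial (Fin 4) K) 0 = X 0 := rfl
    have h1 : (![X 0, 0, X 2, X 3] : Fin 4 → MvPolynomial (Fin 4) K) 1 = 0 := rfl
    have h2 : (![X 0, 0, X 2, X 3] : Fin 4 → MvPolynomial (Fin 4) K) 2 = X 2 := rfl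
    have h3 : (![X 0, 0, X 2, X 3] : Fin 4 → MvPolynomial (Fin 4) K) 3 = X 3 := rfl
    rw [h0, h1, h2, h3]
    ring
  have h0' : phi K (X 0) = X 0 := by simp [phi]
  have h2' : phi K (X 2) = X 2 := by simp [phi]
  rw [Bf, map_mul, map_mul, map_pow, map_pow, map_pow, hd, h0', h2', monomial_e]
  rw [map_one, one_mul, mul_pow, pow_zero, mul_one]
  rw [pow_add]
  ring

end WeitzD

namespace WeitzD
set_option linter.unusedSectionVars false
open Finset Module
variable {K : Type} [Field K] [CharZero K]

theorem finrank_P (D : Derivation K (MvPolynomial (Fin 4) K) (MvPolynomial (Fin 4) K))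
    (hD : D = MvPolynomial.mkDerivation K ![0, MvPolynomial.X 0, 0, MvPolynomial.X 2])
    (i : ℕ) :
    Module.finrank K
      ↥(homogeneousSubmodule (Fin 4) K i ⊓ LinearMap.ker D.toLinearMap) = (S i).card := by
  classical
  set P := homogeneousSubmodule (Fin 4) K i ⊓ LinearMap.ker D.toLinearMap with hP
  -- kernel condition in pderiv form
  have hker : ∀ f : MvPolynomial (Fin 4) K, f ∈ LinearMap.ker D.toLinearMap →
      X 0 * pderiv 1 f + X 2 * pderiv 3 f = 0 := by
    intro f hf
    rw [LinearMap.mem_ker] at hf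
    have : D f = 0 := hf
    rwa [D_eq D hD] at this
  -- the W space
  let vW : ↥(T i) → MvPolynomial (Fin 4) K :=
    fun m => monomial (m : Fin 4 →₀ ℕ) (1 : K)
  let W : Submodule K (MvPolynomial (Fin 4) K) := Submodule.span K (Set.range vW)
  have hvW_eq : vW = (basisMonomials (Fin 4) K) ∘ (Subtype.val) := by
    funext m
    simp [vW, coe_basisMonomials]
  have hvW_li : LinearIndependent K vW := by
    rw [hvW_eq]
    exact (basisMonomials (Fin 4) K).linearIndependent.comp Subtype.val Subtype.val_injective
  have hWfin : FiniteDimensional K W := FiniteDimensional.span_of_finite K (Set.finite_range vW)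
  have hWrank : finrank K W = (S i).card := by
    rw [finrank_span_eq_card hvW_li, Fintype.card_coe, card_T]
  -- the map ψ : P → W
  have hmem : ∀ x : P, (phi K).toLinearMap ((P.subtype : P →ₗ[K] MvPolynomial (Fin 4) K) x) ∈ W := by
    rintro ⟨f, hf⟩
    obtain ⟨hf1, hf2⟩ := Submodule.mem_inf.mp hf
    have hfhom : f.IsHomogeneous i := (mem_homogeneousSubmodule i f).mp hf1
    have hfk := hker f hf2
    simp only [Submodule.coe_subtype, AlgHom.toLinearMap_apply]
    rw [← MvPolynomial.support_sum_monomial_coeff (phi K f)]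
    apply Submodule.sum_mem
    intro m hm
    rw [MvPolynomial.mem_support_iff] at hm
    have hmT : m ∈ T i := by
      rw [coeff_phi] at hm
      by_cases h1 : m 1 = 0
      · rw [if_pos h1] at hm
        rw [mem_T]
        refine ⟨h1, ?_, ?_⟩
        · by_contra hdeg
          apply hm
          apply hfhom.coeff_eq_zero
          rw [eq_e m, degree_e, h1]
          omega
        · by_contra hlt
          apply hm
          rw [eq_e m, h1]
          exact L1 hfk (by omega)
      · rw [if_neg h1] at hm
        exact absurd rfl hm
    have : monomial m (coeff m (phi K f)) = (coeff m (phi K f)) • monomial m (1 : K) := by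
      rw [smul_monomial, smul_eq_mul, mul_one]
    rw [this]
    exact Submodule.smul_mem _ _ (Submodule.subset_span ⟨⟨m, hmT⟩, rfl⟩)
  let ψ : P →ₗ[K] W :=
    LinearMap.codRestrict W ((phi K).toLinearMap ∘ₗ P.subtype) hmem
  have hψinj : Function.Injective ψ := by
    rw [← LinearMap.ker_eq_bot]
    rw [LinearMap.ker_eq_bot']
    rintro ⟨f, hf⟩ hx
    obtain ⟨hf1, hf2⟩ := Submodule.mem_inf.mp hf
    have hfk := hker f hf2
    have hphi : phi K f = 0 := by
      have := congrArg (Subtype.val) hx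
      simpa [ψ] using this
    have hf0 : f = 0 := by
      apply eq_zero_of_slice hfk
      intro a γ d
      have := congrArg (coeff (e a 0 γ d)) hphi
      rw [coeff_phi, e_apply1, if_pos rfl, coeff_zero] at this
      exact this
    exact Subtype.ext hf0
  have hPfin : FiniteDimensional K P := FiniteDimensional.of_injective ψ hψinj
  -- lower bound family
  have hBmem : ∀ p : ↥(S i), Bf K (p : ℕ × ℕ × ℕ) ∈ P := by
    rintro ⟨p, hp⟩
    apply Submodule.mem_inf.mpr
    constructor
    · exact (mem_homogeneousSubmodule _ _).mpr (Bf_hom hp)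
    · rw [LinearMap.mem_ker]
      exact D_Bf D hD p
  let vP : ↥(S i) → P := fun p => ⟨Bf K (p : ℕ × ℕ × ℕ), hBmem p⟩
  have hvP_li : LinearIndependent K vP := by
    apply LinearIndependent.of_comp ((phi K).toLinearMap ∘ₗ P.subtype)
    have hcomp : (((phi K).toLinearMap ∘ₗ P.subtype) ∘ vP)
        = (basisMonomials (Fin 4) K) ∘
          (fun p : ↥(S i) =>
            e ((p : ℕ × ℕ × ℕ).1 + (p : ℕ × ℕ × ℕ).2.2) 0
              (p : ℕ × ℕ × ℕ).2.1 (p : ℕ × ℕ × ℕ).2.2) := by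
      funext p
      simp only [Function.comp_apply, LinearMap.coe_comp, Submodule.coe_subtype,
        AlgHom.toLinearMap_apply, coe_basisMonomials, vP]
      exact phi_Bf _
    rw [hcomp]
    apply (basisMonomials (Fin 4) K).linearIndependent.comp
    intro p q h
    obtain ⟨h1, _, h2, h3⟩ := e_inj h
    apply Subtype.ext
    obtain ⟨⟨p1, p2, p3⟩, hp⟩ := p
    obtain ⟨⟨q1, q2, q3⟩, hq⟩ := q
    dsimp only at h1 h2 h3 ⊢
    simp only [Prod.mk.injEq]
    omega
  apply le_antisymm
  · calc finrank K P ≤ finrank K W := LinearMap.finrank_le_finrank_of_injective (f := ψ) hψinj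
      _ = (S i).card := hWrank
  · have := hvP_li.fintype_card_le_finrank
    rwa [Fintype.card_coe] at this

end WeitzD

namespace WeitzD
open PowerSeries

lemma ps_eq : (PowerSeries.mk fun i => ((S i).card : ℚ)) =
    (((1 : PowerSeries ℚ) - PowerSeries.X) ^ 2 *
      ((1 : PowerSeries ℚ) - PowerSeries.X ^ 2))⁻¹ := by
  have hconst : (PowerSeries.constantCoeff (R := ℚ))
      (((1 : PowerSeries ℚ) - PowerSeries.X) ^ 2 *
        ((1 : PowerSeries ℚ) - PowerSeries.X ^ 2)) ≠ 0 := by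
    simp
  rw [PowerSeries.eq_inv_iff_mul_eq_one hconst]
  have hexp : ((1 : PowerSeries ℚ) - PowerSeries.X) ^ 2 *
      ((1 : PowerSeries ℚ) - PowerSeries.X ^ 2)
      = 1 - 2*PowerSeries.X + 2*PowerSeries.X^3 - PowerSeries.X^4 := by ring
  rw [hexp]
  have hsplit : (PowerSeries.mk fun i => ((S i).card : ℚ)) *
      (1 - 2*PowerSeries.X + 2*PowerSeries.X^3 - PowerSeries.X^4)
      = (PowerSeries.mk fun i => ((S i).card : ℚ))
        - ((PowerSeries.mk fun i => ((S i).card : ℚ)) * PowerSeries.X^1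
           + (PowerSeries.mk fun i => ((S i).card : ℚ)) * PowerSeries.X^1)
        + ((PowerSeries.mk fun i => ((S i).card : ℚ)) * PowerSeries.X^3
           + (PowerSeries.mk fun i => ((S i).card : ℚ)) * PowerSeries.X^3)
        - (PowerSeries.mk fun i => ((S i).card : ℚ)) * PowerSeries.X^4 := by
    ring
  rw [hsplit]
  ext n
  simp only [map_sub, map_add, PowerSeries.coeff_mk, PowerSeries.coeff_mul_X_pow',
    PowerSeries.coeff_one]
  rcases n with _ | n
  · norm_num [card_S_zero]
  rcases n with _ | n
  · norm_num [card_S_zero, card_S_one]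
  rcases n with _ | n
  · norm_num [card_S_one, card_S_two]
  rcases n with _ | n
  · norm_num [card_S_zero, card_S_two, card_S_three]
  · have hn : n + 1 + 1 + 1 + 1 = n + 4 := by omega
    rw [hn]
    have e1 : (1:ℕ) ≤ n + 4 := by omega
    have e3 : (3:ℕ) ≤ n + 4 := by omega
    have e4 : (4:ℕ) ≤ n + 4 := by omega
    rw [if_pos e1, if_pos e3, if_pos e4, if_neg (by omega)]
    have h1 : n + 4 - 1 = (n+1) + 2 := by omega
    have h3 : n + 4 - 3 = n + 1 := by omega
    have h4 : n + 4 - 4 = n := by omega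
    have h0 : n + 4 = (n+2) + 2 := by omega
    rw [h1, h3, h4, h0, card_S_rec, card_S_rec, card_S_rec]
    push_cast
    ring

end WeitzD

/-- The Poincaré series of the kernel of the Weitzenböck derivation `D` on
`K[x₀,x₁,y₀,y₁]` with `D x₀ = 0`, `D x₁ = x₀`, `D y₀ = 0`, `D y₁ = y₀` (graded by total
degree) equals `1/((1-z)²(1-z²))`. -/
theorem poincare_series_ker_D11 (K : Type) [Field K] [CharZero K]
    (D : Derivation K (MvPolynomial (Fin 4) K) (MvPolynomial (Fin 4) K))
    (hD : D = MvPolynomial.mkDerivation K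
      ![0, MvPolynomial.X 0, 0, MvPolynomial.X 2]) :
    (PowerSeries.mk fun i =>
        (Module.finrank K
          ↥(MvPolynomial.homogeneousSubmodule (Fin 4) K i ⊓
            LinearMap.ker D.toLinearMap) : ℚ)) =
      (((1 : PowerSeries ℚ) - PowerSeries.X) ^ 2 *
        ((1 : PowerSeries ℚ) - PowerSeries.X ^ 2))⁻¹ := by
  simp only [WeitzD.finrank_P D hD]
  exact WeitzD.ps_eq
end
end

section
/- For n ≥ 1, the rational function ∑_{k=1}^{n} ((−1)^{n−k}/((k−1)!·(n−k)!))·(n)_{n−k} · d^{k−1}/dz^{k−1}( (1+z)·z^{2n−k−1}/(1−z^2)^{2n−k} ), where (n)_m is the rising factorial, has nonnegative integer Taylor coefficients at z = 0; for n = 2 it equals 1/((1−z)^2(1−z^2)). -/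
open PowerSeries

open Finset
open PowerSeries Finset

noncomputable def Sser (t : ℕ) : PowerSeries ℚ :=
  PowerSeries.mk fun i => if Even i then ((i / 2 + t).choose t : ℚ) else 0

lemma coeff_Sser (t i : ℕ) :
    PowerSeries.coeff i (Sser t) = if Even i then ((i / 2 + t).choose t : ℚ) else 0 := by
  simp [Sser]

lemma coeff_one_sub_sq_mul (f : PowerSeries ℚ) (i : ℕ) :
    PowerSeries.coeff i (((1 : PowerSeries ℚ) - X ^ 2) * f) =
      PowerSeries.coeff i f - if 2 ≤ i then PowerSeries.coeff (i - 2) f else 0 := by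
  rw [sub_mul, one_mul, map_sub,
    show ((X : PowerSeries ℚ) ^ 2 * f) = f * X ^ 2 by ring, coeff_mul_X_pow']

lemma one_sub_sq_mul_Sser_succ (t : ℕ) :
    ((1 : PowerSeries ℚ) - X ^ 2) * Sser (t + 1) = Sser t := by
  ext i
  rw [coeff_one_sub_sq_mul, coeff_Sser (t + 1) i, coeff_Sser t i]
  rcases Nat.even_or_odd i with he | ho
  · obtain ⟨s, rfl⟩ := he
    rcases Nat.eq_zero_or_pos s with rfl | hs
    · simp
    · have hE : Even (s + s) := ⟨s, rfl⟩
      have hE2 : Even (s + s - 2) := ⟨s - 1, by omega⟩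
      rw [if_pos hE, if_pos (by omega : 2 ≤ s + s), coeff_Sser, if_pos hE2, if_pos hE]
      have e1 : (s + s) / 2 = s := by omega
      have e2 : (s + s - 2) / 2 = s - 1 := by omega
      rw [e1, e2]
      obtain ⟨s', rfl⟩ : ∃ s', s = s' + 1 := ⟨s - 1, by omega⟩
      have e3 : s' + 1 + (t + 1) = (s' + t + 1) + 1 := by omega
      have e4 : s' + 1 - 1 = s' := by omega
      rw [e3, e4, Nat.choose_succ_succ' (s' + t + 1) t]
      push_cast
      ring
  · obtain ⟨r, rfl⟩ := ho
    have h1 : ¬ Even (2 * r + 1) := by rintro ⟨m, hm⟩; omega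
    rw [if_neg h1, if_neg h1]
    split_ifs with h2
    · rw [coeff_Sser, if_neg (by rintro ⟨m, hm⟩; omega : ¬ Even (2 * r + 1 - 2))]
      ring
    · ring

lemma one_sub_sq_pow_mul_Sser (t : ℕ) :
    ((1 : PowerSeries ℚ) - X ^ 2) ^ (t + 1) * Sser t = 1 := by
  induction t with
  | zero =>
      rw [pow_one]
      ext i
      rw [coeff_one_sub_sq_mul, coeff_Sser 0 i, PowerSeries.coeff_one]
      rcases Nat.even_or_odd i with he | ho
      · obtain ⟨s, rfl⟩ := he
        rcases Nat.eq_zero_or_pos s with rfl | hs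
        · simp
        · have hE : Even (s + s) := ⟨s, rfl⟩
          have hE2 : Even (s + s - 2) := ⟨s - 1, by omega⟩
          rw [if_pos hE, if_pos (by omega : 2 ≤ s + s), coeff_Sser, if_pos hE2,
            if_neg (by omega : ¬ s + s = 0)]
          simp
      · obtain ⟨r, rfl⟩ := ho
        have h1 : ¬ Even (2 * r + 1) := by rintro ⟨m, hm⟩; omega
        rw [if_neg h1, if_neg (by omega : ¬ 2 * r + 1 = 0)]
        split_ifs with h2
        · rw [coeff_Sser, if_neg (by rintro ⟨m, hm⟩; omega : ¬ Even (2 * r + 1 - 2))]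
          ring
        · ring
  | succ t ih =>
      calc ((1 : PowerSeries ℚ) - X ^ 2) ^ (t + 2) * Sser (t + 1)
          = ((1 : PowerSeries ℚ) - X ^ 2) ^ (t + 1) *
              (((1 : PowerSeries ℚ) - X ^ 2) * Sser (t + 1)) := by ring
        _ = 1 := by rw [one_sub_sq_mul_Sser_succ t]; exact ih

lemma inv_one_sub_sq_pow (t : ℕ) :
    (((1 : PowerSeries ℚ) - X ^ 2) ^ (t + 1))⁻¹ = Sser t := by
  rw [PowerSeries.inv_eq_iff_mul_eq_one, mul_comm, one_sub_sq_pow_mul_Sser]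
  simp

lemma coeff_iter_deriv (r : ℕ) : ∀ (f : PowerSeries ℚ) (i : ℕ),
    PowerSeries.coeff i (PowerSeries.derivativeFun^[r] f) =
      (∏ s ∈ Finset.range r, ((i + s + 1 : ℕ) : ℚ)) * PowerSeries.coeff (i + r) f := by
  induction r with
  | zero => intro f i; simp
  | succ r ih =>
      intro f i
      rw [Function.iterate_succ_apply, ih (derivativeFun f) i,
        show PowerSeries.coeff (i + r) (derivativeFun f) = _ from
          PowerSeries.coeff_derivative f (i + r), Finset.prod_range_succ,
        show i + r + 1 = i + (r + 1) by omega]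
      have : ((i + r : ℕ) : ℚ) + 1 = ((i + (r + 1) : ℕ) : ℚ) := by push_cast; ring
      rw [mul_comm ((PowerSeries.coeff (i + (r+1))) f), ← mul_assoc, this]
lemma coeff_G (n k i : ℕ) (hk1 : 1 ≤ k) (hkn : k ≤ n) :
    PowerSeries.coeff (i + k - 1)
      ((1 + X) * X ^ (2 * n - k - 1) * ((((1 : PowerSeries ℚ) - X ^ 2) ^ (2 * n - k))⁻¹)) =
      ((n + i / 2 - 1).choose (2 * n - k - 1) : ℚ) := by
  have hnk : 2 * n - k = (2 * n - k - 1) + 1 := by omega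
  rw [hnk, inv_one_sub_sq_pow]
  simp only [Nat.add_sub_cancel]
  set p := 2 * n - k - 1 with hp
  have hsplit : (1 + X) * X ^ p * Sser p = Sser p * X ^ p + Sser p * X ^ (p + 1) := by
    ring
  rw [hsplit, map_add, PowerSeries.coeff_mul_X_pow', PowerSeries.coeff_mul_X_pow',
    coeff_Sser, coeff_Sser]
  set j := i + k - 1 with hj
  rcases Nat.even_or_odd i with he | ho
  · obtain ⟨q, rfl⟩ := he
    have hq2 : (q + q) / 2 = q := by omega
    rcases le_or_gt n (q + k) with hc | hc
    · have h1 : p ≤ j := by omega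
      have h2 : Even (j - p) := ⟨q + k - n, by omega⟩
      have e1 : (j - p) / 2 + p = n + (q + q) / 2 - 1 := by omega
      rw [if_pos h1, if_pos h2, e1]
      have hz : (if p + 1 ≤ j then
          (if Even (j - (p + 1)) then (((j - (p + 1)) / 2 + p).choose p : ℚ) else 0) else 0) = 0 := by
        split_ifs with ha hb
        · exact absurd hb (by rintro ⟨m, hm⟩; omega)
        · rfl
        · rfl
      rw [hz, add_zero]
    · have h1 : ¬ p ≤ j := by omega
      have h2 : ¬ p + 1 ≤ j := by omega
      rw [if_neg h1, if_neg h2, Nat.choose_eq_zero_of_lt (by omega)]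
      norm_num
  · obtain ⟨q, rfl⟩ := ho
    have hq2 : (2 * q + 1) / 2 = q := by omega
    rcases le_or_gt n (q + k) with hc | hc
    · have h1 : p + 1 ≤ j := by omega
      have h2 : Even (j - (p + 1)) := ⟨q + k - n, by omega⟩
      have e1 : (j - (p + 1)) / 2 + p = n + (2 * q + 1) / 2 - 1 := by omega
      rw [if_pos h1, if_pos h2, e1]
      have hz : (if p ≤ j then
          (if Even (j - p) then (((j - p) / 2 + p).choose p : ℚ) else 0) else 0) = 0 := by
        split_ifs with ha hb
        · exact absurd hb (by rintro ⟨m, hm⟩; omega)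
        · rfl
        · rfl
      rw [hz, zero_add]
    · have h1 : ¬ p ≤ j := by omega
      have h2 : ¬ p + 1 ≤ j := by omega
      rw [if_neg h1, if_neg h2, Nat.choose_eq_zero_of_lt (by omega)]
      norm_num

lemma diffV : ∀ (q a b : ℕ),
    (∑ j ∈ Finset.range (q + 1),
      (-1 : ℚ) ^ j * (q.choose j : ℚ) * (((a + q - j).choose (b + q) : ℕ) : ℚ)) =
    ((a.choose b : ℕ) : ℚ) := by
  intro q
  induction q with
  | zero => intro a b; simp
  | succ q ih =>
      intro a b
      have hstep : ∀ j ∈ Finset.range (q + 1),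
          (-1 : ℚ) ^ (j + 1) * ((q + 1).choose (j + 1) : ℚ) *
              (((a + (q + 1) - (j + 1)).choose (b + (q + 1)) : ℕ) : ℚ) =
            -((-1 : ℚ) ^ j * (q.choose j : ℚ) *
                (((a + q - j).choose (b + q + 1) : ℕ) : ℚ))
            - (-1 : ℚ) ^ j * (q.choose (j + 1) : ℚ) *
                (((a + q - j).choose (b + q + 1) : ℕ) : ℚ) := by
        intro j hj
        have e1 : a + (q + 1) - (j + 1) = a + q - j := by omega
        rw [e1, Nat.choose_succ_succ q j]
        simp only [Nat.succ_eq_add_one]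
        push_cast
        ring
      rw [Finset.sum_range_succ', Finset.sum_congr rfl hstep, Finset.sum_sub_distrib]
      -- name the three sums
      have hU : (∑ j ∈ Finset.range (q + 1), (-1 : ℚ) ^ j * (q.choose j : ℚ) *
          (((a + q + 1 - j).choose (b + q + 1) : ℕ) : ℚ)) =
          (∑ j ∈ Finset.range (q + 1), (-1 : ℚ) ^ j * (q.choose j : ℚ) *
            (((a + q - j).choose (b + q) : ℕ) : ℚ))
          + (∑ j ∈ Finset.range (q + 1), (-1 : ℚ) ^ j * (q.choose j : ℚ) *
            (((a + q - j).choose (b + q + 1) : ℕ) : ℚ)) := by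
        rw [← Finset.sum_add_distrib]
        refine Finset.sum_congr rfl fun j hj => ?_
        simp only [Finset.mem_range] at hj
        have e1 : a + q + 1 - j = (a + q - j) + 1 := by omega
        rw [e1, Nat.choose_succ_succ' (a + q - j) (b + q)]
        push_cast
        ring
      -- B identity: ∑ (-1)^j C(q,j+1) g(j+1) = g 0 - U'
      have hB : (∑ j ∈ Finset.range (q + 1), (-1 : ℚ) ^ j * (q.choose (j + 1) : ℚ) *
          (((a + q - j).choose (b + q + 1) : ℕ) : ℚ)) =
          (((a + q + 1).choose (b + q + 1) : ℕ) : ℚ)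
          - (∑ j ∈ Finset.range (q + 1), (-1 : ℚ) ^ j * (q.choose j : ℚ) *
            (((a + q + 1 - j).choose (b + q + 1) : ℕ) : ℚ)) := by
        have hT : (∑ j ∈ Finset.range (q + 2), (-1 : ℚ) ^ j * (q.choose j : ℚ) *
            (((a + q + 1 - j).choose (b + q + 1) : ℕ) : ℚ)) =
            (∑ j ∈ Finset.range (q + 1), (-1 : ℚ) ^ j * (q.choose j : ℚ) *
              (((a + q + 1 - j).choose (b + q + 1) : ℕ) : ℚ)) := by
          rw [Finset.sum_range_succ, Nat.choose_succ_self]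
          push_cast
          ring
        have hT2 : (∑ j ∈ Finset.range (q + 2), (-1 : ℚ) ^ j * (q.choose j : ℚ) *
            (((a + q + 1 - j).choose (b + q + 1) : ℕ) : ℚ)) =
            (∑ j ∈ Finset.range (q + 1), (-1 : ℚ) ^ (j + 1) * (q.choose (j + 1) : ℚ) *
              (((a + q + 1 - (j + 1)).choose (b + q + 1) : ℕ) : ℚ))
            + (-1 : ℚ) ^ 0 * (q.choose 0 : ℚ) *
              (((a + q + 1 - 0).choose (b + q + 1) : ℕ) : ℚ) :=
          Finset.sum_range_succ' _ (q + 1)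
        rw [hT] at hT2
        have : ∀ j ∈ Finset.range (q + 1),
            (-1 : ℚ) ^ (j + 1) * (q.choose (j + 1) : ℚ) *
              (((a + q + 1 - (j + 1)).choose (b + q + 1) : ℕ) : ℚ) =
            -((-1 : ℚ) ^ j * (q.choose (j + 1) : ℚ) *
              (((a + q - j).choose (b + q + 1) : ℕ) : ℚ)) := by
          intro j hj
          have e1 : a + q + 1 - (j + 1) = a + q - j := by omega
          rw [e1]; ring
        rw [Finset.sum_congr rfl this, Finset.sum_neg_distrib] at hT2
        simp only [pow_zero, Nat.choose_zero_right, Nat.cast_one, one_mul, Nat.sub_zero] at hT2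
        linarith [hT2]
      -- also rewrite the (j+1) indexed first sum's indices: a + (q+1) - (j+1) handled already
      -- now put it together
      have hA : (∑ x ∈ Finset.range (q + 1),
            -((-1 : ℚ) ^ x * (q.choose x : ℚ) * (((a + q - x).choose (b + q + 1) : ℕ) : ℚ))) =
          -(∑ x ∈ Finset.range (q + 1),
            (-1 : ℚ) ^ x * (q.choose x : ℚ) * (((a + q - x).choose (b + q + 1) : ℕ) : ℚ)) :=
        Finset.sum_neg_distrib _
      rw [hA]
      have e0 : a + (q + 1) - 0 = a + q + 1 := by omega
      simp only [e0, pow_zero, Nat.choose_zero_right, Nat.cast_one, one_mul]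
      have hb1 : b + (q + 1) = b + q + 1 := by omega
      simp only [hb1]
      rw [hB]
      rw [hU] at *
      have := ih a b
      linarith

lemma prod_eq_asc (i r : ℕ) : (∏ s ∈ Finset.range r, (i + s + 1)) = (i + 1).ascFactorial r := by
  induction r with
  | zero => simp
  | succ r ih =>
      rw [Finset.prod_range_succ, ih, Nat.ascFactorial_succ]
      ring

lemma prod_eq_choose (i r : ℕ) :
    (∏ s ∈ Finset.range r, ((i + s + 1 : ℕ) : ℚ)) =
      (r.factorial : ℚ) * ((i + r).choose i : ℚ) := by
  have h : (∏ s ∈ Finset.range r, (i + s + 1)) = r.factorial * (i + r).choose i := by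
    rw [prod_eq_asc, Nat.ascFactorial_eq_factorial_mul_choose]
    congr 1
    rw [show i + r = r + i by omega, Nat.choose_symm_add]
  calc (∏ s ∈ Finset.range r, ((i + s + 1 : ℕ) : ℚ))
      = ((∏ s ∈ Finset.range r, (i + s + 1) : ℕ) : ℚ) := by push_cast; rfl
    _ = _ := by rw [h]; push_cast; ring

lemma choose_four (m j d : ℕ) :
    ((m + j).choose j : ℚ) * ((m + j + d).choose (m + j) : ℚ) =
      ((m + j + d).choose (j + d) : ℚ) * ((j + d).choose j : ℚ) := by
  rw [Nat.cast_choose ℚ (by omega : j ≤ m + j),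
    Nat.cast_choose ℚ (by omega : m + j ≤ m + j + d),
    Nat.cast_choose ℚ (by omega : j + d ≤ m + j + d),
    Nat.cast_choose ℚ (by omega : j ≤ j + d),
    show m + j - j = m by omega, show m + j + d - (m + j) = d by omega,
    show m + j + d - (j + d) = m by omega, show j + d - j = d by omega]
  have h1 : (m.factorial : ℚ) ≠ 0 := Nat.cast_ne_zero.mpr (Nat.factorial_ne_zero m)
  have h2 : (j.factorial : ℚ) ≠ 0 := Nat.cast_ne_zero.mpr (Nat.factorial_ne_zero j)
  have h3 : (d.factorial : ℚ) ≠ 0 := Nat.cast_ne_zero.mpr (Nat.factorial_ne_zero d)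
  have h4 : ((m + j).factorial : ℚ) ≠ 0 := Nat.cast_ne_zero.mpr (Nat.factorial_ne_zero _)
  have h5 : ((j + d).factorial : ℚ) ≠ 0 := Nat.cast_ne_zero.mpr (Nat.factorial_ne_zero _)
  field_simp

lemma asc_mul_choose (n q j : ℕ) (hn : 1 ≤ n) (hj : j ≤ n - 1) :
    (Nat.ascFactorial n j : ℚ) * ((n + q - 1).choose (n + j - 1) : ℚ) =
      (j.factorial : ℚ) * ((n + q - 1).choose q : ℚ) * (q.choose j : ℚ) := by
  rw [Nat.ascFactorial_eq_factorial_mul_choose']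
  rcases le_or_gt j q with hle | hlt
  · obtain ⟨d, rfl⟩ : ∃ d, q = j + d := ⟨q - j, by omega⟩
    obtain ⟨m, rfl⟩ : ∃ m, n = m + 1 := ⟨n - 1, by omega⟩
    push_cast
    rw [show m + 1 + j - 1 = m + j by omega, show m + 1 + (j + d) - 1 = m + j + d by omega,
      mul_assoc, choose_four m j d, ← mul_assoc]
  · rw [Nat.choose_eq_zero_of_lt (by omega : n + q - 1 < n + j - 1),
      Nat.choose_eq_zero_of_lt hlt]
    push_cast
    ring

lemma term_eq (n i k q : ℕ) (hn : 1 ≤ n) (hk1 : 1 ≤ k) (hkn : k ≤ n) :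
    ((-1 : ℚ) ^ (n - k) * (Nat.ascFactorial n (n - k) : ℚ) /
        (((k - 1).factorial : ℚ) * ((n - k).factorial : ℚ))) *
      ((∏ s ∈ Finset.range (k - 1), ((i + s + 1 : ℕ) : ℚ)) *
        ((n + q - 1).choose (2 * n - k - 1) : ℚ)) =
    (-1 : ℚ) ^ (n - k) * (q.choose (n - k) : ℚ) * ((i + (k - 1)).choose i : ℚ) *
      ((n + q - 1).choose q : ℚ) := by
  rw [prod_eq_choose i (k - 1)]
  have h2 := asc_mul_choose n q (n - k) hn (by omega)
  rw [show n + (n - k) - 1 = 2 * n - k - 1 by omega] at h2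
  have hf1 : (((k - 1).factorial : ℚ)) ≠ 0 := Nat.cast_ne_zero.mpr (Nat.factorial_ne_zero _)
  have hf2 : (((n - k).factorial : ℚ)) ≠ 0 := Nat.cast_ne_zero.mpr (Nat.factorial_ne_zero _)
  field_simp
  linear_combination (((i + (k - 1)).choose i : ℚ)) * h2

lemma coeff_P_formula (n : ℕ) (hn : 1 ≤ n) (i : ℕ) :
    PowerSeries.coeff i (∑ k ∈ Finset.Icc 1 n,
      (((-1 : ℚ) ^ (n - k) * (Nat.ascFactorial n (n - k) : ℚ) /
          (((k - 1).factorial : ℚ) * ((n - k).factorial : ℚ))) •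
        (PowerSeries.derivativeFun)^[k - 1]
          ((1 + PowerSeries.X) * PowerSeries.X ^ (2 * n - k - 1) *
            ((((1 : PowerSeries ℚ) - PowerSeries.X ^ 2) ^ (2 * n - k))⁻¹)))) =
    ((n - 1 + i / 2).choose (i / 2) : ℚ) * ((n - 1 + (i + 1) / 2).choose ((i + 1) / 2) : ℚ) := by
  set q := i / 2 with hq
  rw [map_sum]
  have hterm : ∀ k ∈ Finset.Icc 1 n,
      PowerSeries.coeff i
        (((-1 : ℚ) ^ (n - k) * (Nat.ascFactorial n (n - k) : ℚ) /
            (((k - 1).factorial : ℚ) * ((n - k).factorial : ℚ))) •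
          (PowerSeries.derivativeFun)^[k - 1]
            ((1 + PowerSeries.X) * PowerSeries.X ^ (2 * n - k - 1) *
              ((((1 : PowerSeries ℚ) - PowerSeries.X ^ 2) ^ (2 * n - k))⁻¹))) =
      (-1 : ℚ) ^ (n - k) * (q.choose (n - k) : ℚ) * ((i + k - 1).choose i : ℚ) *
        ((n + q - 1).choose q : ℚ) := by
    intro k hk
    obtain ⟨hk1, hkn⟩ := Finset.mem_Icc.mp hk
    rw [LinearMap.map_smul, smul_eq_mul, coeff_iter_deriv,
      show i + (k - 1) = i + k - 1 by omega, coeff_G n k i hk1 hkn,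
      show n + i / 2 - 1 = n + q - 1 by rw [hq], term_eq n i k q hn hk1 hkn,
      show i + (k - 1) = i + k - 1 by omega]
  rw [Finset.sum_congr rfl hterm]
  have hreindex : (∑ k ∈ Finset.Icc 1 n,
      (-1 : ℚ) ^ (n - k) * (q.choose (n - k) : ℚ) * ((i + k - 1).choose i : ℚ) *
        ((n + q - 1).choose q : ℚ)) =
      ∑ j ∈ Finset.range n,
        (-1 : ℚ) ^ j * (q.choose j : ℚ) * (((i + n - 1 - j).choose i : ℕ) : ℚ) *
          ((n + q - 1).choose q : ℚ) := by
    refine Finset.sum_nbij' (fun k => n - k) (fun j => n - j) ?_ ?_ ?_ ?_ ?_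
    · intro k hk
      obtain ⟨hk1, hkn⟩ := Finset.mem_Icc.mp hk
      refine Finset.mem_range.mpr ?_
      show n - k < n
      omega
    · intro j hj
      have := Finset.mem_range.mp hj
      refine Finset.mem_Icc.mpr ?_
      show 1 ≤ n - j ∧ n - j ≤ n
      omega
    · intro k hk
      obtain ⟨hk1, hkn⟩ := Finset.mem_Icc.mp hk
      show n - (n - k) = k
      omega
    · intro j hj
      have := Finset.mem_range.mp hj
      show n - (n - j) = j
      omega
    · intro k hk
      obtain ⟨hk1, hkn⟩ := Finset.mem_Icc.mp hk
      show (-1 : ℚ) ^ (n - k) * (q.choose (n - k) : ℚ) * ((i + k - 1).choose i : ℚ) *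
        ((n + q - 1).choose q : ℚ) =
        (-1 : ℚ) ^ (n - k) * (q.choose (n - k) : ℚ) * (((i + n - 1 - (n - k)).choose i : ℕ) : ℚ) *
          ((n + q - 1).choose q : ℚ)
      rw [show i + n - 1 - (n - k) = i + k - 1 by omega]
  rw [hreindex]
  have hq_le : q ≤ i := by omega
  have hbridge : (∑ j ∈ Finset.range n,
      (-1 : ℚ) ^ j * (q.choose j : ℚ) * (((i + n - 1 - j).choose i : ℕ) : ℚ) *
        ((n + q - 1).choose q : ℚ)) =
      ∑ j ∈ Finset.range (q + 1),
        (-1 : ℚ) ^ j * (q.choose j : ℚ) * (((i + n - 1 - j).choose i : ℕ) : ℚ) *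
          ((n + q - 1).choose q : ℚ) := by
    rcases le_or_gt (q + 1) n with hc | hc
    · refine (Finset.sum_subset (Finset.range_subset_range.mpr hc) ?_).symm
      intro j hj hnj
      have h1 := Finset.mem_range.mp hj
      have h2 : q < j := by
        rcases Nat.lt_or_ge q j with h | h
        · exact h
        · exact absurd (Finset.mem_range.mpr (by omega)) hnj
      rw [Nat.choose_eq_zero_of_lt h2]
      push_cast
      ring
    · refine Finset.sum_subset (Finset.range_subset_range.mpr (by omega)) ?_
      intro j hj hnj
      have h1 := Finset.mem_range.mp hj
      have h2 : n ≤ j := by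
        rcases Nat.lt_or_ge j n with h | h
        · exact absurd (Finset.mem_range.mpr h) hnj
        · exact h
      rw [Nat.choose_eq_zero_of_lt (by omega : i + n - 1 - j < i)]
      push_cast
      ring
  rw [hbridge]
  have hdv := diffV q (i + n - 1 - q) (i - q)
  have e1 : ∀ j ∈ Finset.range (q + 1), i + n - 1 - q + q - j = i + n - 1 - j := by
    intro j hj; omega
  have e2 : i - q + q = i := by omega
  calc (∑ j ∈ Finset.range (q + 1),
        (-1 : ℚ) ^ j * (q.choose j : ℚ) * (((i + n - 1 - j).choose i : ℕ) : ℚ) *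
          ((n + q - 1).choose q : ℚ))
      = (∑ j ∈ Finset.range (q + 1),
        (-1 : ℚ) ^ j * (q.choose j : ℚ) *
          (((i + n - 1 - q + q - j).choose (i - q + q) : ℕ) : ℚ)) *
          ((n + q - 1).choose q : ℚ) := by
        rw [Finset.sum_mul]
        refine Finset.sum_congr rfl fun j hj => ?_
        rw [e1 j hj, e2]
    _ = (((i + n - 1 - q).choose (i - q) : ℕ) : ℚ) * ((n + q - 1).choose q : ℚ) := by
        rw [hdv]
    _ = ((n - 1 + i / 2).choose (i / 2) : ℚ) * ((n - 1 + (i + 1) / 2).choose ((i + 1) / 2) : ℚ) := by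
        rw [show i + n - 1 - q = n - 1 + (i + 1) / 2 by omega,
          show i - q = (i + 1) / 2 by omega,
          show n + q - 1 = n - 1 + i / 2 by omega, hq]
        ring

/-- For `n ≥ 1`, the series
`∑_{k=1}^n ((-1)^{n-k}/((k-1)!(n-k)!))·(n)_{n-k} · d^{k-1}/dz^{k-1}((1+z)·z^{2n-k-1}/(1-z²)^{2n-k})`
(the Poincaré series of the kernel of the Weitzenböck derivation with `n` Jordan blocks of
size 2) has nonnegative integer Taylor coefficients at `z = 0`; for `n = 2` it equals
`1/((1-z)²(1-z²))`. -/
theorem poincare_ones (n : ℕ) (hn : 1 ≤ n) (P : PowerSeries ℚ)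
    (hP : P = ∑ k ∈ Finset.Icc 1 n,
      (((-1 : ℚ) ^ (n - k) * (Nat.ascFactorial n (n - k) : ℚ) /
          (((k - 1).factorial : ℚ) * ((n - k).factorial : ℚ))) •
        (PowerSeries.derivativeFun)^[k - 1]
          ((1 + PowerSeries.X) * PowerSeries.X ^ (2 * n - k - 1) *
            ((((1 : PowerSeries ℚ) - PowerSeries.X ^ 2) ^ (2 * n - k))⁻¹)))) :
    (∀ i : ℕ, ∃ c : ℕ, PowerSeries.coeff i P = (c : ℚ)) ∧
      (n = 2 → P = (((1 : PowerSeries ℚ) - PowerSeries.X) ^ 2 *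
        ((1 : PowerSeries ℚ) - PowerSeries.X ^ 2))⁻¹) := by
  have hcoeff : ∀ i : ℕ, PowerSeries.coeff i P =
      (((n - 1 + i / 2).choose (i / 2) : ℕ) : ℚ) *
        (((n - 1 + (i + 1) / 2).choose ((i + 1) / 2) : ℕ) : ℚ) := by
    intro i
    rw [hP, coeff_P_formula n hn i]
  constructor
  · intro i
    refine ⟨(n - 1 + i / 2).choose (i / 2) * (n - 1 + (i + 1) / 2).choose ((i + 1) / 2), ?_⟩
    rw [hcoeff i]
    push_cast
    ring
  · rintro rfl
    have hc : ∀ i : ℕ, PowerSeries.coeff i P =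
        (((i / 2 + 1) * ((i + 1) / 2 + 1) : ℕ) : ℚ) := by
      intro i
      rw [hcoeff i, show (2 : ℕ) - 1 + i / 2 = i / 2 + 1 by omega,
        show (2 : ℕ) - 1 + (i + 1) / 2 = (i + 1) / 2 + 1 by omega,
        Nat.choose_succ_self_right, Nat.choose_succ_self_right]
      push_cast
      ring
    rw [PowerSeries.eq_inv_iff_mul_eq_one (by simp)]
    calc P * (((1 : PowerSeries ℚ) - X) ^ 2 * (1 - X ^ 2))
        = P - P * X ^ 1 - P * X ^ 1 + P * X ^ 3 + P * X ^ 3 - P * X ^ 4 := by ring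
      _ = 1 := by
          ext m
          simp only [map_sub, map_add, PowerSeries.coeff_mul_X_pow', hc,
            PowerSeries.coeff_one]
          rcases Nat.lt_or_ge m 4 with hm | hm
          · interval_cases m <;> norm_num
          · obtain ⟨j, rfl⟩ : ∃ j, m = j + 4 := ⟨m - 4, by omega⟩
            rw [if_pos (by omega : 1 ≤ j + 4), if_pos (by omega : 3 ≤ j + 4),
              if_pos (by omega : 4 ≤ j + 4), if_neg (by omega : ¬ j + 4 = 0),
              show j + 4 - 1 = j + 3 by omega, show j + 4 - 3 = j + 1 by omega,
              show j + 4 - 4 = j by omega]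
            rcases Nat.even_or_odd j with he | ho
            · obtain ⟨r, rfl⟩ := he
              rw [show (r + r + 4) / 2 = r + 2 by omega,
                show (r + r + 4 + 1) / 2 = r + 2 by omega,
                show (r + r + 3) / 2 = r + 1 by omega,
                show (r + r + 1) / 2 = r by omega,
                show (r + r + 1 + 1) / 2 = r + 1 by omega,
                show (r + r) / 2 = r by omega]
              push_cast
              ring
            · obtain ⟨r, rfl⟩ := ho
              rw [show (2 * r + 1 + 4) / 2 = r + 2 by omega,
                show (2 * r + 1 + 4 + 1) / 2 = r + 3 by omega,
                show (2 * r + 1 + 3) / 2 = r + 2 by omega,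
                show (2 * r + 1 + 1) / 2 = r + 1 by omega,
                show (2 * r + 1 + 1 + 1) / 2 = r + 1 by omega,
                show (2 * r + 1) / 2 = r by omega]
              push_cast
              ring
end
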